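/- For all y, z ∈ D: ⟨Ly, z⟩ − ⟨y, Lz⟩ = (e^{−2iδ} − 1)·(Δy_{−1})·conj(z_{−1}) − (e^{2iδ} − 1)·y_{−1}·conj(Δz_{−1}), where for w ∈ D one sets w₁ = w_{−1}, w₀ = (1 − e^{2iδ}) w_{−1} + e^{2iδ} w₂, and Δw_{−1} = w₀ − w_{−1}. In particular, if δ = 0 then ⟨Ly, z⟩ = ⟨y, Lz⟩ for all y, z ∈ D. -/

import Mathlib

open ComplexConjugate

/-- The index set ℤ₀ = ℤ \ {0,1} as a subtype. -/
abbrev Z0 := {n : ℤ // n ≠ 0 ∧ n ≠ 1}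

noncomputable def e2 (δ : ℝ) : ℂ := Complex.exp (2 * (δ : ℂ) * Complex.I)

/-- Extension of y : ℤ → ℂ by the auxiliary values y₁ = y_{−1} and
y₀ = (1 − e^{2iδ}) y_{−1} + e^{2iδ} y₂ coming from the impulse conditions. -/
noncomputable def ext (δ : ℝ) (y : ℤ → ℂ) : ℤ → ℂ := fun n =>
  if n = 0 then (1 - e2 δ) * y (-1) + e2 δ * y 2
  else if n = 1 then y (-1)
  else y n

/-- (Ly)_n = −Δ²y_{n−1} + q_n y_n for n ∈ ℤ₀, using the auxiliary values. -/
noncomputable def Lop (δ : ℝ) (q : ℤ → ℝ) (y : ℤ → ℂ) (n : ℤ) : ℂ :=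
  -(ext δ y (n + 1) - 2 * ext δ y n + ext δ y (n - 1)) + (q n : ℂ) * y n

/-- Membership in the domain D = { y ∈ l₀² : (qₙ yₙ) ∈ l₀² }. -/
def MemD (q : ℤ → ℝ) (y : ℤ → ℂ) : Prop :=
  Summable (fun n : Z0 => ‖y (n : ℤ)‖ ^ 2) ∧
  Summable (fun n : Z0 => ‖(q (n : ℤ) : ℂ) * y (n : ℤ)‖ ^ 2)

/- ------------------ auxiliary material ------------------ -/

section Aux
open Filter

lemma ext_eq (δ : ℝ) (a : ℤ → ℂ) {n : ℤ} (h0 : n ≠ 0) (h1 : n ≠ 1) : ext δ a n = a n := by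
  simp [ext, h0, h1]

/-- The set ℤ₀ inside ℤ. -/
def SZ0 : Set ℤ := {n | n ≠ 0 ∧ n ≠ 1}

lemma summable_mul_of_sq {ι : Type*} {f g : ι → ℂ}
    (hf : Summable fun i => ‖f i‖ ^ 2) (hg : Summable fun i => ‖g i‖ ^ 2) :
    Summable fun i => f i * g i := by
  refine Summable.of_norm_bounded (g := fun i => (‖f i‖ ^ 2 + ‖g i‖ ^ 2) / 2)
    ((hf.add hg).div_const 2) fun i => ?_
  rw [norm_mul]
  nlinarith [sq_nonneg (‖f i‖ - ‖g i‖), norm_nonneg (f i), norm_nonneg (g i)]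

lemma summable_ext_sq {δ : ℝ} {a : ℤ → ℂ} (ha : Summable fun n : Z0 => ‖a (n : ℤ)‖ ^ 2) :
    Summable fun n : ℤ => ‖ext δ a n‖ ^ 2 := by
  have h1 : Summable ((fun n : ℤ => ‖ext δ a n‖ ^ 2) ∘ (Subtype.val : SZ0 → ℤ)) := by
    refine ha.congr fun n => ?_
    show ‖a (n : ℤ)‖ ^ 2 = ‖ext δ a (n : ℤ)‖ ^ 2
    rw [ext_eq δ a n.2.1 n.2.2]
  have h2 := summable_subtype_iff_indicator.mp h1
  refine h2.congr_cofinite ?_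
  have hfin : ({0, 1} : Set ℤ).Finite := Set.toFinite _
  refine Filter.eventually_cofinite.mpr (hfin.subset ?_)
  intro x hx
  by_contra hmem
  apply hx
  have hx0 : x ≠ 0 := by rintro rfl; simp at hmem
  have hx1 : x ≠ 1 := by rintro rfl; simp at hmem
  rw [Set.indicator_of_mem (show x ∈ SZ0 from ⟨hx0, hx1⟩)]

lemma summable_conj_sq {ι : Type*} {g : ι → ℂ} (hg : Summable fun i => ‖g i‖ ^ 2) :
    Summable fun i => ‖conj (g i)‖ ^ 2 :=
  hg.congr fun i => by rw [starRingEnd_apply, norm_star]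

/-- Summability on ℤ₀ of shifted products of extended ℓ² sequences. -/
lemma summable_prod_res (δ : ℝ) {a b : ℤ → ℂ} (c d : ℤ)
    (ha : Summable fun n : Z0 => ‖a (n : ℤ)‖ ^ 2)
    (hb : Summable fun n : Z0 => ‖b (n : ℤ)‖ ^ 2) :
    Summable fun n : Z0 => ext δ a ((n : ℤ) + c) * conj (ext δ b ((n : ℤ) + d)) := by
  have hA : Summable fun n : ℤ => ‖ext δ a (n + c)‖ ^ 2 :=
    ((Equiv.addRight c).summable_iff.mpr (summable_ext_sq ha)).congr fun n => rfl
  have hB : Summable fun n : ℤ => ‖ext δ b (n + d)‖ ^ 2 :=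
    ((Equiv.addRight d).summable_iff.mpr (summable_ext_sq hb)).congr fun n => rfl
  have hG : Summable fun n : ℤ => ext δ a (n + c) * conj (ext δ b (n + d)) :=
    summable_mul_of_sq hA (summable_conj_sq hB)
  exact hG.subtype SZ0

/-- The (conjugate) Wronskian. -/
noncomputable def Wr (δ : ℝ) (y z : ℤ → ℂ) (m : ℤ) : ℂ :=
  ext δ y (m + 1) * conj (ext δ z m) - ext δ y m * conj (ext δ z (m + 1))

lemma tendsto_pos_seq {a : ℤ → ℂ} (ha : Summable fun n : Z0 => ‖a (n : ℤ)‖ ^ 2) :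
    Tendsto (fun k : ℕ => a ((k : ℤ) + 2)) atTop (nhds 0) := by
  have hj : Function.Injective (fun k : ℕ =>
      (⟨(k : ℤ) + 2, by omega, by omega⟩ : Z0)) := by
    intro i j hij
    have : (i : ℤ) + 2 = (j : ℤ) + 2 := congrArg Subtype.val hij
    omega
  have hs0 := ha.comp_injective hj
  have hs : Summable fun k : ℕ => ‖a ((k : ℤ) + 2)‖ ^ 2 := hs0.congr fun k => rfl
  have ht := hs.tendsto_atTop_zero
  rw [tendsto_zero_iff_norm_tendsto_zero]
  have h2 := (Real.continuous_sqrt.tendsto 0).comp ht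
  simp only [Function.comp_def, Real.sqrt_sq (norm_nonneg _), Real.sqrt_zero] at h2
  exact h2

lemma tendsto_neg_seq {a : ℤ → ℂ} (ha : Summable fun n : Z0 => ‖a (n : ℤ)‖ ^ 2) :
    Tendsto (fun k : ℕ => a (-1 - (k : ℤ))) atTop (nhds 0) := by
  have hj : Function.Injective (fun k : ℕ =>
      (⟨-1 - (k : ℤ), by omega, by omega⟩ : Z0)) := by
    intro i j hij
    have : -1 - (i : ℤ) = -1 - (j : ℤ) := congrArg Subtype.val hij
    omega
  have hs0 := ha.comp_injective hj
  have hs : Summable fun k : ℕ => ‖a (-1 - (k : ℤ))‖ ^ 2 := hs0.congr fun k => rfl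
  have ht := hs.tendsto_atTop_zero
  rw [tendsto_zero_iff_norm_tendsto_zero]
  have h2 := (Real.continuous_sqrt.tendsto 0).comp ht
  simp only [Function.comp_def, Real.sqrt_sq (norm_nonneg _), Real.sqrt_zero] at h2
  exact h2

lemma tendsto_conj_zero {f : ℕ → ℂ} (h : Tendsto f atTop (nhds 0)) :
    Tendsto (fun k => conj (f k)) atTop (nhds 0) := by
  have := (Complex.continuous_conj.tendsto 0).comp h
  simpa [Function.comp_def] using this

lemma tendsto_W_pos (δ : ℝ) {y z : ℤ → ℂ}
    (hy1 : Summable fun n : Z0 => ‖y (n : ℤ)‖ ^ 2)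
    (hz1 : Summable fun n : Z0 => ‖z (n : ℤ)‖ ^ 2) :
    Tendsto (fun N : ℕ => Wr δ y z ((N : ℤ) + 1)) atTop (nhds 0) := by
  have hy2 : Tendsto (fun k : ℕ => y ((k : ℤ) + 2)) atTop (nhds 0) := tendsto_pos_seq hy1
  have hy1' : Tendsto (fun k : ℕ => y ((k : ℤ) + 1)) atTop (nhds 0) := by
    refine (Filter.tendsto_add_atTop_iff_nat 1).mp ?_
    exact hy2.congr fun n => congrArg y (by push_cast; ring)
  have hz2 : Tendsto (fun k : ℕ => z ((k : ℤ) + 2)) atTop (nhds 0) := tendsto_pos_seq hz1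
  have hz1' : Tendsto (fun k : ℕ => z ((k : ℤ) + 1)) atTop (nhds 0) := by
    refine (Filter.tendsto_add_atTop_iff_nat 1).mp ?_
    exact hz2.congr fun n => congrArg z (by push_cast; ring)
  have hlim : Tendsto (fun N : ℕ =>
      y ((N : ℤ) + 2) * conj (z ((N : ℤ) + 1)) - y ((N : ℤ) + 1) * conj (z ((N : ℤ) + 2)))
      atTop (nhds 0) := by
    have := (hy2.mul (tendsto_conj_zero hz1')).sub (hy1'.mul (tendsto_conj_zero hz2))
    simpa using this
  refine hlim.congr' ?_
  filter_upwards [eventually_ge_atTop 1] with N hN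
  have h1 : ((N : ℤ) + 1) ≠ 0 := by omega
  have h2 : ((N : ℤ) + 1) ≠ 1 := by omega
  have h3 : ((N : ℤ) + 1 + 1) ≠ 0 := by omega
  have h4 : ((N : ℤ) + 1 + 1) ≠ 1 := by omega
  rw [Wr, ext_eq δ y h3 h4, ext_eq δ y h1 h2, ext_eq δ z h1 h2, ext_eq δ z h3 h4,
    show (N : ℤ) + 1 + 1 = (N : ℤ) + 2 by ring]

lemma tendsto_W_neg (δ : ℝ) {y z : ℤ → ℂ}
    (hy1 : Summable fun n : Z0 => ‖y (n : ℤ)‖ ^ 2)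
    (hz1 : Summable fun n : Z0 => ‖z (n : ℤ)‖ ^ 2) :
    Tendsto (fun N : ℕ => Wr δ y z (-1 - (N : ℤ))) atTop (nhds 0) := by
  have hy2 : Tendsto (fun k : ℕ => y (-1 - (k : ℤ))) atTop (nhds 0) := tendsto_neg_seq hy1
  have hy1' : Tendsto (fun k : ℕ => y (-(k : ℤ))) atTop (nhds 0) := by
    refine (Filter.tendsto_add_atTop_iff_nat 1).mp ?_
    exact hy2.congr fun n => congrArg y (by push_cast; ring)
  have hz2 : Tendsto (fun k : ℕ => z (-1 - (k : ℤ))) atTop (nhds 0) := tendsto_neg_seq hz1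
  have hz1' : Tendsto (fun k : ℕ => z (-(k : ℤ))) atTop (nhds 0) := by
    refine (Filter.tendsto_add_atTop_iff_nat 1).mp ?_
    exact hz2.congr fun n => congrArg z (by push_cast; ring)
  have hlim : Tendsto (fun N : ℕ =>
      y (-(N : ℤ)) * conj (z (-1 - (N : ℤ))) - y (-1 - (N : ℤ)) * conj (z (-(N : ℤ))))
      atTop (nhds 0) := by
    have := (hy1'.mul (tendsto_conj_zero hz2)).sub (hy2.mul (tendsto_conj_zero hz1'))
    simpa using this
  refine hlim.congr' ?_
  filter_upwards [eventually_ge_atTop 1] with N hN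
  have h1 : (-1 - (N : ℤ)) ≠ 0 := by omega
  have h2 : (-1 - (N : ℤ)) ≠ 1 := by omega
  have h3 : (-1 - (N : ℤ) + 1) ≠ 0 := by omega
  have h4 : (-1 - (N : ℤ) + 1) ≠ 1 := by omega
  rw [Wr, ext_eq δ y h3 h4, ext_eq δ y h1 h2, ext_eq δ z h1 h2, ext_eq δ z h3 h4,
    show -1 - (N : ℤ) + 1 = -(N : ℤ) by ring]

end Aux

/-- for all y, z ∈ D,
⟨Ly, z⟩ − ⟨y, Lz⟩ = (e^{−2iδ} − 1)(Δy_{−1}) conj(z_{−1}) − (e^{2iδ} − 1) y_{−1} conj(Δz_{−1});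
in particular L is Hermitian when δ = 0. -/
theorem L_nonhermitian_formula (δ : ℝ) (hδ : 0 ≤ δ ∧ δ < Real.pi / 2)
    (q : ℤ → ℝ) (y z : ℤ → ℂ) (hy : MemD q y) (hz : MemD q z) :
    ((∑' n : Z0, Lop δ q y (n : ℤ) * conj (z (n : ℤ))) -
        ∑' n : Z0, y (n : ℤ) * conj (Lop δ q z (n : ℤ))) =
      (Complex.exp (-(2 * (δ : ℂ)) * Complex.I) - 1) * (ext δ y 0 - y (-1)) * conj (z (-1)) -
        (e2 δ - 1) * y (-1) * conj (ext δ z 0 - z (-1)) ∧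
    (δ = 0 →
      (∑' n : Z0, Lop δ q y (n : ℤ) * conj (z (n : ℤ))) =
        ∑' n : Z0, y (n : ℤ) * conj (Lop δ q z (n : ℤ))) := by
  obtain ⟨hy1, hy2⟩ := hy
  obtain ⟨hz1, hz2⟩ := hz
  -- summability of the two series
  have sg1 : Summable (fun n : Z0 => Lop δ q y (n : ℤ) * conj (z (n : ℤ))) := by
    have t1 := summable_prod_res δ 1 0 hy1 hz1
    have t2 := summable_prod_res δ 0 0 hy1 hz1
    have t3 := summable_prod_res δ (-1) 0 hy1 hz1
    have t4 : Summable fun n : Z0 => ((q (n : ℤ) : ℂ) * y (n : ℤ)) * conj (z (n : ℤ)) :=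
      summable_mul_of_sq hy2 (summable_conj_sq hz1)
    refine ((((t1.neg).add (t2.mul_left 2)).sub t3).add t4).congr fun n => ?_
    obtain ⟨m, h0, h1⟩ := n
    simp only [add_zero]
    rw [show m + (-1) = m - 1 by ring]
    simp only [Lop]
    rw [ext_eq δ y h0 h1, ext_eq δ z h0 h1]
    ring
  have sg2 : Summable (fun n : Z0 => y (n : ℤ) * conj (Lop δ q z (n : ℤ))) := by
    have u1 := summable_prod_res δ 0 1 hy1 hz1
    have u2 := summable_prod_res δ 0 0 hy1 hz1
    have u3 := summable_prod_res δ 0 (-1) hy1 hz1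
    have u4 : Summable fun n : Z0 => y (n : ℤ) * conj ((q (n : ℤ) : ℂ) * z (n : ℤ)) :=
      summable_mul_of_sq hy1 (summable_conj_sq hz2)
    refine ((((u1.neg).add (u2.mul_left 2)).sub u3).add u4).congr fun n => ?_
    obtain ⟨m, h0, h1⟩ := n
    simp only [add_zero]
    rw [show m + (-1) = m - 1 by ring]
    simp only [Lop, map_add, map_sub, map_neg, map_mul, map_ofNat, Complex.conj_ofReal]
    rw [ext_eq δ y h0 h1, ext_eq δ z h0 h1]
    ring
  -- pointwise Green/Wronskian identity
  have key : ∀ n : Z0, Lop δ q y (n : ℤ) * conj (z (n : ℤ)) -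
      y (n : ℤ) * conj (Lop δ q z (n : ℤ)) = Wr δ y z ((n : ℤ) - 1) - Wr δ y z (n : ℤ) := by
    rintro ⟨m, h0, h1⟩
    simp only [Lop, Wr, map_add, map_sub, map_neg, map_mul, map_ofNat, Complex.conj_ofReal]
    rw [show m - 1 + 1 = m by ring, ext_eq δ y h0 h1, ext_eq δ z h0 h1]
    ring
  have hsumW : Summable (fun n : Z0 => Wr δ y z ((n : ℤ) - 1) - Wr δ y z (n : ℤ)) :=
    (sg1.sub sg2).congr key
  -- the difference of the sums is the sum of the differences
  have hsub : ((∑' n : Z0, Lop δ q y (n : ℤ) * conj (z (n : ℤ))) -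
      ∑' n : Z0, y (n : ℤ) * conj (Lop δ q z (n : ℤ))) =
      ∑' n : Z0, (Wr δ y z ((n : ℤ) - 1) - Wr δ y z (n : ℤ)) := by
    rw [← (sg1.hasSum.sub sg2.hasSum).tsum_eq]
    exact tsum_congr key
  -- split ℤ₀ into positive and negative parts and telescope
  set h : Z0 → ℂ := fun n : Z0 => Wr δ y z ((n : ℤ) - 1) - Wr δ y z (n : ℤ) with hh
  have hWs : HasSum h (Wr δ y z 1 + (0 - Wr δ y z (-1))) := by
    set s : Set Z0 := {n : Z0 | 0 < (n : ℤ)} with hs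
    set t : Set Z0 := {n : Z0 | (n : ℤ) < 0} with ht
    have hcompl : IsCompl s t := by
      constructor
      · rw [Set.disjoint_left]
        rintro ⟨m, hm0, hm1⟩ hms hmt
        simp only [hs, ht, Set.mem_setOf_eq] at hms hmt
        omega
      · rw [codisjoint_iff, eq_top_iff]
        rintro ⟨m, hm0, hm1⟩ -
        simp only [hs, ht, Set.sup_eq_union, Set.mem_union, Set.mem_setOf_eq]
        omega
    -- positive part
    have hpos : HasSum (h ∘ (Subtype.val : s → Z0)) (Wr δ y z 1) := by
      have hjm : ∀ k : ℕ, ((⟨(k : ℤ) + 2, by omega, by omega⟩ : Z0)) ∈ s := by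
        intro k; simp only [hs, Set.mem_setOf_eq]; omega
      set j : ℕ → s := fun k => ⟨⟨(k : ℤ) + 2, by omega, by omega⟩, hjm k⟩ with hj
      have hbij : Function.Bijective j := by
        constructor
        · intro a b hab
          have : (a : ℤ) + 2 = (b : ℤ) + 2 :=
            congrArg (fun p : s => ((p : Z0) : ℤ)) hab
          omega
        · rintro ⟨⟨m, hm0, hm1⟩, hms⟩
          simp only [hs, Set.mem_setOf_eq] at hms
          refine ⟨(m - 2).toNat, ?_⟩
          apply Subtype.ext; apply Subtype.ext
          show ((m - 2).toNat : ℤ) + 2 = m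
          omega
      set e : ℕ ≃ s := Equiv.ofBijective j hbij with he
      rw [← e.hasSum_iff]
      have hfe : ((h ∘ (Subtype.val : s → Z0)) ∘ e) =
          fun k : ℕ => Wr δ y z ((k : ℤ) + 1) - Wr δ y z ((k : ℤ) + 2) := by
        funext k
        show h ⟨(k : ℤ) + 2, by omega, by omega⟩ = _
        rw [hh]
        show Wr δ y z ((k : ℤ) + 2 - 1) - Wr δ y z ((k : ℤ) + 2) = _
        rw [show (k : ℤ) + 2 - 1 = (k : ℤ) + 1 by ring]
      rw [hfe]
      -- telescoping
      have hsumF : Summable (fun k : ℕ => Wr δ y z ((k : ℤ) + 1) - Wr δ y z ((k : ℤ) + 2)) := by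
        rw [← hfe]
        exact ((hsumW.subtype s).congr fun _ => rfl).comp_injective e.injective
      have hpart : ∀ N : ℕ, (∑ i ∈ Finset.range N,
          (Wr δ y z ((i : ℤ) + 1) - Wr δ y z ((i : ℤ) + 2))) =
          Wr δ y z 1 - Wr δ y z ((N : ℤ) + 1) := by
        intro N
        have h := Finset.sum_range_sub' (fun i : ℕ => Wr δ y z ((i : ℤ) + 1)) N
        calc (∑ i ∈ Finset.range N, (Wr δ y z ((i : ℤ) + 1) - Wr δ y z ((i : ℤ) + 2)))
            = ∑ i ∈ Finset.range N,
              (Wr δ y z ((i : ℤ) + 1) - Wr δ y z (((i + 1 : ℕ) : ℤ) + 1)) := by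
              refine Finset.sum_congr rfl fun i _ => ?_
              rw [show (((i + 1 : ℕ) : ℤ) + 1) = (i : ℤ) + 2 by push_cast; ring]
          _ = Wr δ y z (((0 : ℕ) : ℤ) + 1) - Wr δ y z (((N : ℕ) : ℤ) + 1) := h
          _ = Wr δ y z 1 - Wr δ y z ((N : ℤ) + 1) := by norm_num
      have hlim1 : Filter.Tendsto (fun N : ℕ => ∑ i ∈ Finset.range N,
          (Wr δ y z ((i : ℤ) + 1) - Wr δ y z ((i : ℤ) + 2))) Filter.atTop
          (nhds (Wr δ y z 1)) := by
        rw [Filter.tendsto_congr hpart]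
        have hc : Filter.Tendsto (fun _ : ℕ => Wr δ y z 1) Filter.atTop
          (nhds (Wr δ y z 1)) := tendsto_const_nhds
        have := hc.sub (tendsto_W_pos δ hy1 hz1)
        simpa using this
      have := tendsto_nhds_unique hsumF.hasSum.tendsto_sum_nat hlim1
      exact this ▸ hsumF.hasSum
    -- negative part
    have hneg : HasSum (h ∘ (Subtype.val : t → Z0)) (0 - Wr δ y z (-1)) := by
      have hjm : ∀ k : ℕ, ((⟨-1 - (k : ℤ), by omega, by omega⟩ : Z0)) ∈ t := by
        intro k; simp only [ht, Set.mem_setOf_eq]; omega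
      set j : ℕ → t := fun k => ⟨⟨-1 - (k : ℤ), by omega, by omega⟩, hjm k⟩ with hj
      have hbij : Function.Bijective j := by
        constructor
        · intro a b hab
          have : -1 - (a : ℤ) = -1 - (b : ℤ) :=
            congrArg (fun p : t => ((p : Z0) : ℤ)) hab
          omega
        · rintro ⟨⟨m, hm0, hm1⟩, hmt⟩
          simp only [ht, Set.mem_setOf_eq] at hmt
          refine ⟨(-1 - m).toNat, ?_⟩
          apply Subtype.ext; apply Subtype.ext
          show -1 - ((-1 - m).toNat : ℤ) = m
          omega
      set e : ℕ ≃ t := Equiv.ofBijective j hbij with he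
      rw [← e.hasSum_iff]
      have hfe : ((h ∘ (Subtype.val : t → Z0)) ∘ e) =
          fun k : ℕ => Wr δ y z (-1 - ((k : ℤ) + 1)) - Wr δ y z (-1 - (k : ℤ)) := by
        funext k
        show h ⟨-1 - (k : ℤ), by omega, by omega⟩ = _
        rw [hh]
        show Wr δ y z (-1 - (k : ℤ) - 1) - Wr δ y z (-1 - (k : ℤ)) = _
        rw [show -1 - (k : ℤ) - 1 = -1 - ((k : ℤ) + 1) by ring]
      rw [hfe]
      have hsumF : Summable (fun k : ℕ =>
          Wr δ y z (-1 - ((k : ℤ) + 1)) - Wr δ y z (-1 - (k : ℤ))) := by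
        rw [← hfe]
        exact ((hsumW.subtype t).congr fun _ => rfl).comp_injective e.injective
      have hpart : ∀ N : ℕ, (∑ i ∈ Finset.range N,
          (Wr δ y z (-1 - ((i : ℤ) + 1)) - Wr δ y z (-1 - (i : ℤ)))) =
          Wr δ y z (-1 - (N : ℤ)) - Wr δ y z (-1) := by
        intro N
        have h := Finset.sum_range_sub (fun i : ℕ => Wr δ y z (-1 - (i : ℤ))) N
        calc (∑ i ∈ Finset.range N,
              (Wr δ y z (-1 - ((i : ℤ) + 1)) - Wr δ y z (-1 - (i : ℤ))))
            = ∑ i ∈ Finset.range N,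
              (Wr δ y z (-1 - ((i + 1 : ℕ) : ℤ)) - Wr δ y z (-1 - (i : ℤ))) := by
              refine Finset.sum_congr rfl fun i _ => ?_
              rw [show (-1 - ((i + 1 : ℕ) : ℤ)) = -1 - ((i : ℤ) + 1) by push_cast; ring]
          _ = Wr δ y z (-1 - ((N : ℕ) : ℤ)) - Wr δ y z (-1 - ((0 : ℕ) : ℤ)) := h
          _ = Wr δ y z (-1 - (N : ℤ)) - Wr δ y z (-1) := by norm_num
      have hlim1 : Filter.Tendsto (fun N : ℕ => ∑ i ∈ Finset.range N,
          (Wr δ y z (-1 - ((i : ℤ) + 1)) - Wr δ y z (-1 - (i : ℤ)))) Filter.atTop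
          (nhds (0 - Wr δ y z (-1))) := by
        rw [Filter.tendsto_congr hpart]
        exact Filter.Tendsto.sub (tendsto_W_neg δ hy1 hz1) tendsto_const_nhds
      have := tendsto_nhds_unique hsumF.hasSum.tendsto_sum_nat hlim1
      exact this ▸ hsumF.hasSum
    exact hpos.add_isCompl hcompl hneg
  have htsum : (∑' n : Z0, (Wr δ y z ((n : ℤ) - 1) - Wr δ y z (n : ℤ))) =
      Wr δ y z 1 - Wr δ y z (-1) := by
    have := hWs.tsum_eq
    rw [hh] at this
    rw [this]; ring
  -- the boundary algebra
  have hconj : conj (e2 δ) = Complex.exp (-(2 * (δ : ℂ)) * Complex.I) := by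
    rw [e2, ← Complex.exp_conj]
    congr 1
    simp only [map_mul, Complex.conj_ofReal, Complex.conj_I, map_ofNat]
    ring
  have hmul : Complex.exp (-(2 * (δ : ℂ)) * Complex.I) * e2 δ = 1 := by
    rw [e2, ← Complex.exp_add, show -(2 * (δ : ℂ)) * Complex.I + 2 * (δ : ℂ) * Complex.I = 0
      by ring, Complex.exp_zero]
  have hW1 : Wr δ y z 1 = y 2 * conj (z (-1)) - y (-1) * conj (z 2) := by
    rw [Wr]
    norm_num [ext]
  have hWm1 : Wr δ y z (-1) = ext δ y 0 * conj (z (-1)) - y (-1) * conj (ext δ z 0) := by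
    rw [Wr]
    norm_num [ext_eq δ y (show (-1 : ℤ) ≠ 0 by norm_num) (show (-1 : ℤ) ≠ 1 by norm_num),
      ext_eq δ z (show (-1 : ℤ) ≠ 0 by norm_num) (show (-1 : ℤ) ≠ 1 by norm_num)]
  have main : ((∑' n : Z0, Lop δ q y (n : ℤ) * conj (z (n : ℤ))) -
      ∑' n : Z0, y (n : ℤ) * conj (Lop δ q z (n : ℤ))) =
      (Complex.exp (-(2 * (δ : ℂ)) * Complex.I) - 1) * (ext δ y 0 - y (-1)) * conj (z (-1)) -
        (e2 δ - 1) * y (-1) * conj (ext δ z 0 - z (-1)) := by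
    rw [hsub, htsum, hW1, hWm1]
    have hy0 : ext δ y 0 = (1 - e2 δ) * y (-1) + e2 δ * y 2 := by norm_num [ext]
    have hz0 : conj (ext δ z 0) = (1 - Complex.exp (-(2 * (δ : ℂ)) * Complex.I)) * conj (z (-1))
        + Complex.exp (-(2 * (δ : ℂ)) * Complex.I) * conj (z 2) := by
      have : ext δ z 0 = (1 - e2 δ) * z (-1) + e2 δ * z 2 := by norm_num [ext]
      rw [this]
      simp only [map_add, map_sub, map_mul, map_one]
      rw [hconj]
    simp only [map_sub]
    rw [hy0, hz0]
    linear_combination (y (-1) * conj (z 2) - y 2 * conj (z (-1))) * hmul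
  refine ⟨main, fun hδ0 => ?_⟩
  subst hδ0
  have hA : Complex.exp (-(2 * ((0 : ℝ) : ℂ)) * Complex.I) - 1 = 0 := by
    simp
  have hB : e2 0 - 1 = 0 := by
    simp [e2]
  rw [hA, hB] at main
  have hmain0 : ((∑' n : Z0, Lop 0 q y (n : ℤ) * conj (z (n : ℤ))) -
      ∑' n : Z0, y (n : ℤ) * conj (Lop 0 q z (n : ℤ))) = 0 := by
    rw [main]; ring
  exact sub_eq_zero.mp hmain0
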